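/- For any integer n ≥ l ≥ 1, the Gauss valuation v_p(φ_n(T), 1/φ(p^l)) equals 1, where φ(p^l) = p^(l-1)(p-1). -/

import Mathlib

open Polynomial

/-- `φ_n(T) = 1 + (1+T)^(p^(n-1)) + ⋯ + (1+T)^((p-1)p^(n-1))`. -/
noncomputable def phiPoly (p n : ℕ) : Polynomial ℚ :=
  ∑ c ∈ Finset.range p, (1 + Polynomial.X) ^ (c * p ^ (n - 1))

/-- The Gauss valuation `v_p(f, s) = inf_j (v_p(a_j) + j·s)`. -/
noncomputable def gaussVal (p : ℕ) (f : Polynomial ℚ) (s : ℝ) : ℝ :=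
  sInf {v : ℝ | ∃ j ∈ f.support, v = (padicValRat p (f.coeff j) : ℝ) + (j : ℝ) * s}

open Finset in
lemma phiZmod (p n : ℕ) (hp : p.Prime) :
    (∑ c ∈ Finset.range p, ((1 : (ZMod p)[X]) + X) ^ (c * p ^ (n - 1)))
      = X ^ ((p - 1) * p ^ (n - 1)) := by
  haveI : Fact p.Prime := ⟨hp⟩
  set q := p ^ (n - 1) with hq
  have h1 : ((1 : (ZMod p)[X]) + X) ^ q = 1 + X ^ q := by
    simpa using add_pow_char_pow (R := (ZMod p)[X]) (p := p) (x := (1 : (ZMod p)[X])) (y := X) (n := n - 1)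
  have hgeom := geom_sum_mul (((1 : (ZMod p)[X]) + X) ^ q) p
  have h2 : ∀ c, (((1 : (ZMod p)[X]) + X) ^ q) ^ c = ((1 : (ZMod p)[X]) + X) ^ (c * q) := by
    intro c; rw [← pow_mul, mul_comm]
  simp_rw [h2] at hgeom
  have h3 : ((1 : (ZMod p)[X]) + X) ^ q - 1 = X ^ q := by rw [h1]; ring
  have h4 : ((1 : (ZMod p)[X]) + X) ^ (p * q) = 1 + (X ^ q) ^ p := by
    rw [mul_comm, pow_mul, h1]
    simpa using add_pow_char (R := (ZMod p)[X]) (p := p) (x := (1 : (ZMod p)[X])) (y := X ^ q)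
  rw [h3, h4] at hgeom
  have h5 : (1 : (ZMod p)[X]) + (X ^ q) ^ p - 1 = X ^ ((p - 1) * q) * X ^ q := by
    rw [← pow_mul, ← pow_add]
    have : (p - 1) * q + q = q * p := by
      have h1p : 1 ≤ p := hp.one_lt.le
      calc (p - 1) * q + q = (p - 1 + 1) * q := by ring
        _ = q * p := by rw [Nat.sub_add_cancel h1p]; ring
    rw [this]; ring
  rw [h5] at hgeom
  have hX : (X : (ZMod p)[X]) ^ q ≠ 0 := pow_ne_zero _ X_ne_zero
  exact mul_right_cancel₀ hX hgeom

lemma coeff_phiPoly (p n j : ℕ) :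
    (phiPoly p n).coeff j = ((∑ c ∈ Finset.range p, (c * p ^ (n - 1)).choose j : ℕ) : ℚ) := by
  simp [phiPoly, Polynomial.finset_sum_coeff, Polynomial.coeff_one_add_X_pow]

lemma dvd_phi_coeff (p n j : ℕ) (hp : p.Prime) (hj : j ≠ (p - 1) * p ^ (n - 1)) :
    p ∣ ∑ c ∈ Finset.range p, (c * p ^ (n - 1)).choose j := by
  haveI : NeZero p := ⟨hp.ne_zero⟩
  rw [← ZMod.natCast_eq_zero_iff]
  push_cast
  have : (∑ c ∈ Finset.range p, ((c * p ^ (n - 1)).choose j : ZMod p))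
      = ((∑ c ∈ Finset.range p, ((1 : (ZMod p)[X]) + X) ^ (c * p ^ (n - 1))).coeff j) := by
    rw [Polynomial.finset_sum_coeff]
    simp [Polynomial.coeff_one_add_X_pow]
  rw [this, phiZmod p n hp, Polynomial.coeff_X_pow, if_neg (fun h => hj h)]

/-- For any integers `n ≥ l ≥ 1`, the Gauss valuation `v_p(φ_n(T), 1/φ(p^l))` equals `1`,
where `φ(p^l) = p^(l-1)(p-1)`. -/
theorem stmt_4 (p n l : ℕ) (hp : p.Prime) (hodd : Odd p) (hl : 1 ≤ l) (hn : l ≤ n) :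
    gaussVal p (phiPoly p n) (1 / ((p : ℝ) ^ (l - 1) * ((p : ℝ) - 1))) = 1 := by
  haveI : Fact p.Prime := ⟨hp⟩
  set s : ℝ := 1 / ((p : ℝ) ^ (l - 1) * ((p : ℝ) - 1)) with hs
  set A : ℕ → ℕ := fun j => ∑ c ∈ Finset.range p, (c * p ^ (n - 1)).choose j with hA
  have hcoeff : ∀ j, (phiPoly p n).coeff j = ((A j : ℕ) : ℚ) := fun j => coeff_phiPoly p n j
  have hp1 : (1 : ℝ) < p := by exact_mod_cast hp.one_lt
  have hden : (0 : ℝ) < (p : ℝ) ^ (l - 1) * ((p : ℝ) - 1) := by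
    apply mul_pos (pow_pos (by linarith) _); linarith
  have hspos : 0 < s := by positivity
  -- D = φ(p^l)
  set D : ℕ := (p - 1) * p ^ (l - 1) with hD
  have hDs : (D : ℝ) * s = 1 := by
    rw [hD, hs]
    have : ((p - 1 : ℕ) : ℝ) = (p : ℝ) - 1 := by
      have := hp.one_lt; push_cast [Nat.cast_sub this.le]; ring
    push_cast [this]
    rw [mul_one_div, div_eq_one_iff_eq hden.ne']
    ring
  have hA0 : A 0 = p := by simp [hA]
  -- 1 is in the set
  have h0mem : (0 : ℕ) ∈ (phiPoly p n).support := by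
    rw [Polynomial.mem_support_iff, hcoeff, hA0]
    exact_mod_cast hp.ne_zero
  have hval0 : (padicValRat p ((phiPoly p n).coeff 0) : ℝ) = 1 := by
    rw [hcoeff, hA0]
    have : padicValRat p ((p : ℕ) : ℚ) = 1 := by
      rw [show (((p : ℕ) : ℚ)) = ((p : ℚ)) by push_cast; ring]
      exact padicValRat.self hp.one_lt
    rw [this]; norm_num
  have hmem1 : (1 : ℝ) ∈ {v : ℝ | ∃ j ∈ (phiPoly p n).support,
      v = (padicValRat p ((phiPoly p n).coeff j) : ℝ) + (j : ℝ) * s} := by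
    exact ⟨0, h0mem, by rw [hval0]; norm_num⟩
  -- lower bound
  have hlb : ∀ v ∈ {v : ℝ | ∃ j ∈ (phiPoly p n).support,
      v = (padicValRat p ((phiPoly p n).coeff j) : ℝ) + (j : ℝ) * s}, 1 ≤ v := by
    rintro v ⟨j, hjsup, rfl⟩
    have hAj : A j ≠ 0 := by
      rw [Polynomial.mem_support_iff, hcoeff] at hjsup
      exact_mod_cast hjsup
    have hvalnat : (padicValRat p ((phiPoly p n).coeff j) : ℝ) = (padicValNat p (A j) : ℝ) := by
      rw [hcoeff, ← padicValRat_of_nat]; norm_num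
    rw [hvalnat]
    by_cases hjD : D ≤ j
    · have h1 : (1 : ℝ) ≤ (j : ℝ) * s := by
        rw [← hDs]
        exact mul_le_mul_of_nonneg_right (by exact_mod_cast hjD) hspos.le
      have h2 : (0 : ℝ) ≤ (padicValNat p (A j) : ℝ) := by positivity
      linarith
    · push_neg at hjD
      have hjne : j ≠ (p - 1) * p ^ (n - 1) := by
        have hle : D ≤ (p - 1) * p ^ (n - 1) := by
          apply Nat.mul_le_mul_left
          exact Nat.pow_le_pow_right hp.pos (by omega)
        omega
      have hdvd : p ∣ A j := dvd_phi_coeff p n j hp hjne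
      have h1 : 1 ≤ padicValNat p (A j) :=
        one_le_padicValNat_of_dvd hAj hdvd
      have h2 : (0 : ℝ) ≤ (j : ℝ) * s := by positivity
      have : (1 : ℝ) ≤ (padicValNat p (A j) : ℝ) := by exact_mod_cast h1
      linarith
  -- conclude
  rw [gaussVal]
  apply le_antisymm
  · exact csInf_le ⟨1, hlb⟩ hmem1
  · exact le_csInf ⟨1, hmem1⟩ hlb
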